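/- Let M be a symmetric positive semidefinite (n+1)×(n+1) real matrix, and let ξ > 0, λ > 0. Then (Mξ + λI)^{-1} ≤ ξ^{-1} M^+ + λ^{-1}(I − P_M) in the Loewner order, where M^+ is the Moore–Penrose pseudoinverse of M and P_M is the orthogonal projection onto the column space of M. -/

import Mathlib

open Matrix

private lemma psd_smul {n : ℕ} (A : Matrix (Fin n) (Fin n) ℝ) (c : ℝ) (hc : 0 ≤ c)
    (hA : A.PosSemidef) : (c • A).PosSemidef := by
  refine ⟨by unfold Matrix.IsHermitian; rw [conjTranspose_smul, hA.1.eq]; simp, fun x => ?_⟩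
  exact (hA.smul hc).2 x

private lemma pd_smul_one {n : ℕ} (c : ℝ) (hc : 0 < c) :
    ((c • (1 : Matrix (Fin (n+1)) (Fin (n+1)) ℝ))).PosDef := by
  rw [smul_one_eq_diagonal]
  exact posDef_diagonal_iff.mpr (fun _ => hc)

private lemma eq_of_mulVec {n : ℕ} {A B : Matrix (Fin n) (Fin n) ℝ}
    (h : ∀ x, A *ᵥ x = B *ᵥ x) : A = B := by
  ext i j
  have := congrFun (h (Pi.single j 1)) i
  simpa using this

theorem loewner_inverse_bound (n : ℕ)
    (M Mplus P : Matrix (Fin (n + 1)) (Fin (n + 1)) ℝ)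
    (hM : M.PosSemidef) (hMsymm : M.IsSymm)
    -- Mplus is the Moore–Penrose pseudoinverse of M
    (h1 : M * Mplus * M = M) (h2 : Mplus * M * Mplus = Mplus)
    (h3 : (M * Mplus)ᵀ = M * Mplus) (h4 : (Mplus * M)ᵀ = Mplus * M)
    -- P is the orthogonal projection onto the column space of M
    (hPsymm : P.IsSymm) (hPidem : P * P = P)
    (hPrange : LinearMap.range P.mulVecLin = LinearMap.range M.mulVecLin)
    (ξ lam : ℝ) (hξ : 0 < ξ) (hlam : 0 < lam) :
    (ξ⁻¹ • Mplus + lam⁻¹ • ((1 : Matrix (Fin (n + 1)) (Fin (n + 1)) ℝ) - P)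
      - (ξ • M + lam • (1 : Matrix (Fin (n + 1)) (Fin (n + 1)) ℝ))⁻¹).PosSemidef := by
  have hMt : Mᵀ = M := hMsymm
  have hPt : Pᵀ = P := hPsymm
  -- Step 1: Mplus is symmetric (uniqueness of the Moore-Penrose pseudoinverse).
  set N := Mplusᵀ with hNdef
  have e1 : M * N * M = M := by
    have h : (M * Mplus * M)ᵀ = M * N * M := by
      simp [Matrix.transpose_mul, hMt, Matrix.mul_assoc, hNdef]
    rw [← h, h1, hMt]
  have e2 : N * M * N = N := by
    have h : (Mplus * M * Mplus)ᵀ = N * M * N := by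
      simp [Matrix.transpose_mul, hMt, Matrix.mul_assoc, hNdef]
    rw [← h, h2]
  have eMN : M * N = Mplus * M := by
    calc M * N = (Mplus * Mᵀ)ᵀ := by simp [Matrix.transpose_mul, hNdef]
      _ = (Mplus * M)ᵀ := by rw [hMt]
      _ = Mplus * M := h4
  have eNM : N * M = M * Mplus := by
    calc N * M = (Mᵀ * Mplus)ᵀ := by simp [Matrix.transpose_mul, hNdef]
      _ = (M * Mplus)ᵀ := by rw [hMt]
      _ = M * Mplus := h3
  have hMNsymm : (M * N)ᵀ = M * N := by rw [eMN, h4]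
  have hNMsymm : (N * M)ᵀ = N * M := by rw [eNM, h3]
  have eq1 : M * Mplus = M * N := by
    have t1 : M * Mplus = (M * N) * (M * Mplus) := by
      calc M * Mplus = (M * N * M) * Mplus := by rw [e1]
        _ = (M * N) * (M * Mplus) := by rw [Matrix.mul_assoc, Matrix.mul_assoc]
    calc M * Mplus = (M * Mplus)ᵀ := h3.symm
      _ = ((M * N) * (M * Mplus))ᵀ := by rw [← t1]
      _ = (M * Mplus)ᵀ * (M * N)ᵀ := Matrix.transpose_mul _ _
      _ = (M * Mplus) * (M * N) := by rw [h3, hMNsymm]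
      _ = (M * Mplus * M) * N := by simp only [Matrix.mul_assoc]
      _ = M * N := by rw [h1]
  have eq2 : Mplus * M = N * M := by
    have t1 : Mplus * M = (Mplus * M) * (N * M) := by
      calc Mplus * M = Mplus * (M * N * M) := by rw [e1]
        _ = (Mplus * M) * (N * M) := by simp [Matrix.mul_assoc]
    calc Mplus * M = (Mplus * M)ᵀ := h4.symm
      _ = ((Mplus * M) * (N * M))ᵀ := by rw [← t1]
      _ = (N * M)ᵀ * (Mplus * M)ᵀ := Matrix.transpose_mul _ _
      _ = (N * M) * (Mplus * M) := by rw [h4, hNMsymm]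
      _ = N * (M * Mplus * M) := by simp [Matrix.mul_assoc]
      _ = N * M := by rw [h1]
  have hNsymm : Mplusᵀ = Mplus := by
    calc Mplusᵀ = N := hNdef.symm
      _ = N * M * N := e2.symm
      _ = (Mplus * M) * N := by rw [← eq2]
      _ = Mplus * (M * N) := by rw [Matrix.mul_assoc]
      _ = Mplus * (M * Mplus) := by rw [← eq1]
      _ = Mplus * M * Mplus := by rw [Matrix.mul_assoc]
      _ = Mplus := h2
  -- Step 2: Mplus * M = M * Mplus
  have hcomm : Mplus * M = M * Mplus := by
    rw [← h4, Matrix.transpose_mul, hMt, hNsymm]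
  -- Step 3: P = M * Mplus
  have hPM : P * M = M := by
    apply eq_of_mulVec
    intro x
    have hx : M *ᵥ x ∈ LinearMap.range P.mulVecLin := by
      rw [hPrange]; exact ⟨x, rfl⟩
    obtain ⟨y, hy⟩ := hx
    simp only [mulVecLin_apply] at hy
    -- hy : P *ᵥ y = M *ᵥ x
    calc (P * M) *ᵥ x = P *ᵥ (M *ᵥ x) := (Matrix.mulVec_mulVec x P M).symm
      _ = P *ᵥ (P *ᵥ y) := by rw [hy]
      _ = (P * P) *ᵥ y := Matrix.mulVec_mulVec y P P
      _ = P *ᵥ y := by rw [hPidem]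
      _ = M *ᵥ x := hy
  have hQP : (M * Mplus) * P = P := by
    apply eq_of_mulVec
    intro x
    have hx : P *ᵥ x ∈ LinearMap.range M.mulVecLin := by
      rw [← hPrange]; exact ⟨x, rfl⟩
    obtain ⟨y, hy⟩ := hx
    simp only [mulVecLin_apply] at hy
    calc (M * Mplus * P) *ᵥ x = (M * Mplus) *ᵥ (P *ᵥ x) := (Matrix.mulVec_mulVec x (M*Mplus) P).symm
      _ = (M * Mplus) *ᵥ (M *ᵥ y) := by rw [hy]
      _ = ((M * Mplus) * M) *ᵥ y := Matrix.mulVec_mulVec y (M*Mplus) M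
      _ = M *ᵥ y := by rw [h1]
      _ = P *ᵥ x := hy
  have hPQ : P * (M * Mplus) = M * Mplus := by
    rw [← Matrix.mul_assoc, hPM]
  have hPeq : P = M * Mplus := by
    have t : Pᵀ * ((M * Mplus))ᵀ = Pᵀ := by rw [← Matrix.transpose_mul, hQP]
    rw [hPt, h3] at t
    -- t : P * (M * Mplus) = P
    rw [← t, hPQ]
  -- Step 4: the positive definite matrix A
  set A : Matrix (Fin (n+1)) (Fin (n+1)) ℝ := ξ • M + lam • 1 with hAdef
  have hApd : A.PosDef := Matrix.PosDef.posSemidef_add (psd_smul M ξ hξ.le hM) (pd_smul_one lam hlam)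
  have hAsymm : Aᵀ = A := hApd.isHermitian.eq
  have hAdet : IsUnit A.det := A.isUnit_iff_isUnit_det.mp hApd.isUnit
  have hAinv : A⁻¹ * A = 1 := Matrix.nonsing_inv_mul A hAdet
  have hinvA : A * A⁻¹ = 1 := Matrix.mul_nonsing_inv A hAdet
  -- Step 5: the key algebraic identity
  set B : Matrix (Fin (n+1)) (Fin (n+1)) ℝ :=
    ξ⁻¹ • Mplus + lam⁻¹ • (1 - P) with hBdef
  have hMQ : M * (M * Mplus) = M := by
    calc M * (M * Mplus) = M * (Mplus * M) := by rw [hcomm]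
      _ = M * Mplus * M := by rw [← Matrix.mul_assoc]
      _ = M := h1
  have hMB : M * B = ξ⁻¹ • (M * Mplus) := by
    rw [hBdef, hPeq, Matrix.mul_add, Matrix.mul_smul, Matrix.mul_smul, Matrix.mul_sub,
      Matrix.mul_one, hMQ, sub_self, smul_zero, add_zero]
  have hAB : A * B = 1 + (lam * ξ⁻¹) • Mplus := by
    rw [hAdef, Matrix.add_mul, Matrix.smul_mul, Matrix.smul_mul, Matrix.one_mul, hMB,
      smul_smul, mul_inv_cancel₀ hξ.ne', one_smul, hBdef, hPeq, smul_add, smul_smul,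
      smul_smul, mul_inv_cancel₀ hlam.ne', one_smul]
    abel
  have hMplusA : Mplus * A = ξ • (M * Mplus) + lam • Mplus := by
    rw [hAdef]
    simp only [Matrix.mul_add, Matrix.mul_smul, Matrix.mul_one]
    rw [hcomm]
  have key : A * B * A = A + (lam • (M * Mplus) + (lam * lam * ξ⁻¹) • Mplus) := by
    rw [hAB, Matrix.add_mul, Matrix.one_mul, Matrix.smul_mul, hMplusA, smul_add,
      smul_smul, smul_smul, show lam * ξ⁻¹ * ξ = lam by field_simp,
      show lam * ξ⁻¹ * lam = lam * lam * ξ⁻¹ by ring]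
  -- Step 6: PSD of the difference
  have hXpsd : (lam • (M * Mplus) + (lam * lam * ξ⁻¹) • Mplus).PosSemidef := by
    have hQpsd : (M * Mplus).PosSemidef := by
      have hidem : (M * Mplus) * (M * Mplus) = M * Mplus := by
        calc (M * Mplus) * (M * Mplus) = M * (Mplus * M * Mplus) := by
              simp only [Matrix.mul_assoc]
          _ = M * Mplus := by rw [h2]
      have : M * Mplus = (M * Mplus)ᴴ * (M * Mplus) := by
        rw [show (M * Mplus)ᴴ = (M * Mplus)ᵀ from rfl, h3, hidem]
      rw [this]
      exact Matrix.posSemidef_conjTranspose_mul_self _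
    have hMpluspsd : Mplus.PosSemidef := by
      have : Mplus = Mplusᴴ * M * Mplus := by
        rw [show Mplusᴴ = Mplusᵀ from rfl, hNsymm, h2]
      rw [this]
      exact hM.conjTranspose_mul_mul_same Mplus
    exact (psd_smul _ _ hlam.le hQpsd).add
      (psd_smul _ _ (by positivity) hMpluspsd)
  -- Step 7: conjugate by A⁻¹
  have hBsub : B - A⁻¹ = (A⁻¹)ᴴ * (lam • (M * Mplus) + (lam * lam * ξ⁻¹) • Mplus) * A⁻¹ := by
    have hAinvH : (A⁻¹)ᴴ = A⁻¹ := by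
      rw [show (A⁻¹)ᴴ = (A⁻¹)ᵀ from rfl, Matrix.transpose_nonsing_inv, hAsymm]
    rw [hAinvH]
    have expand : A⁻¹ * (A * B * A) * A⁻¹ = B := by
      simp only [Matrix.mul_assoc]
      rw [hinvA, Matrix.mul_one, ← Matrix.mul_assoc, hAinv,
        Matrix.one_mul]
    calc B - A⁻¹ = A⁻¹ * (A * B * A) * A⁻¹ - A⁻¹ := by rw [expand]
      _ = A⁻¹ * (A + (lam • (M * Mplus) + (lam * lam * ξ⁻¹) • Mplus)) * A⁻¹ - A⁻¹ := by rw [key]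
      _ = A⁻¹ * (lam • (M * Mplus) + (lam * lam * ξ⁻¹) • Mplus) * A⁻¹ := by
          rw [Matrix.mul_add, Matrix.add_mul, hAinv, Matrix.one_mul]
          abel
  have := hXpsd.conjTranspose_mul_mul_same A⁻¹
  rw [← hBsub] at this
  exact this
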